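/- Let n ≥ 2 be a natural number, p > 1 and w₁ > 0 real numbers, and let S be a symmetric n×n real matrix. Set D = w₁^{p−2}·(trace(S) + (p−2)·S₁₁). Then (p−1)²·w₁^{2p−4}·S₁₁² + 2(p−1)·w₁^{2p−4}·∑_{j=2}^{n} S_{1j}² + w₁^{2p−4}·∑_{i,j=2}^{n} S_{ij}² ≥ (1/(n−1))·D² − (2(p−1)/(n−1))·w₁^{p−2}·S₁₁·D + (n(p−1)/(n−1))·w₁^{2p−4}·((p−1)·S₁₁² + ∑_{j=2}^{n} S_{1j}²). -/

import Mathlib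

/-- **Refined Kato-type algebraic inequality** (from the proof of Lemma 4.1):
for a symmetric matrix `S` (the Hessian of `w` in an orthonormal frame whose first
vector is `∇w/|∇w|`), `w₁ = |∇w| > 0` and
`D = w₁^{p−2}(tr S + (p−2) S₁₁)` (the `p`-Laplacian), one has
`(p−1)² w₁^{2p−4} S₁₁² + 2(p−1) w₁^{2p−4} ∑_{j≥2} S_{1j}² + w₁^{2p−4} ∑_{i,j≥2} S_{ij}²
  ≥ D²/(n−1) − (2(p−1)/(n−1)) w₁^{p−2} S₁₁ D
    + (n(p−1)/(n−1)) w₁^{2p−4} ((p−1) S₁₁² + ∑_{j≥2} S_{1j}²)`. -/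
theorem refined_kato_inequality {n : ℕ} (hn : 2 ≤ n) (p w₁ : ℝ) (hp : 1 < p)
    (hw : 0 < w₁)
    (S : Matrix (Fin n) (Fin n) ℝ) (hS : S.IsSymm)
    (e₀ : Fin n) (he₀ : e₀ = ⟨0, by omega⟩)
    (D : ℝ) (hD : D = w₁ ^ (p - 2) * (Matrix.trace S + (p - 2) * S e₀ e₀)) :
    1 / ((n : ℝ) - 1) * D ^ 2 -
        2 * (p - 1) / ((n : ℝ) - 1) * (w₁ ^ (p - 2) * S e₀ e₀ * D) +
        (n : ℝ) * (p - 1) / ((n : ℝ) - 1) * (w₁ ^ (2 * p - 4) *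
          ((p - 1) * S e₀ e₀ ^ 2 + ∑ j ∈ Finset.univ.filter (· ≠ e₀), S e₀ j ^ 2)) ≤
      (p - 1) ^ 2 * (w₁ ^ (2 * p - 4) * S e₀ e₀ ^ 2) +
        2 * (p - 1) * (w₁ ^ (2 * p - 4) *
          ∑ j ∈ Finset.univ.filter (· ≠ e₀), S e₀ j ^ 2) +
        w₁ ^ (2 * p - 4) *
          ∑ i ∈ Finset.univ.filter (· ≠ e₀),
            ∑ j ∈ Finset.univ.filter (· ≠ e₀), S i j ^ 2 := by
  set s : Finset (Fin n) := Finset.univ.filter (· ≠ e₀) with hs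
  set a := S e₀ e₀
  set t := ∑ i ∈ s, S i i with ht
  set T := ∑ j ∈ s, S e₀ j ^ 2 with hT
  set Q := ∑ i ∈ s, ∑ j ∈ s, S i j ^ 2 with hQ
  set W := w₁ ^ (p - 2) with hW
  have hWpos : 0 < W := Real.rpow_pos_of_pos hw _
  have hW2 : w₁ ^ (2 * p - 4) = W ^ 2 := by
    rw [hW, ← Real.rpow_natCast (w₁ ^ (p - 2)) 2, ← Real.rpow_mul hw.le]
    norm_num; ring_nf
  have hse : s = Finset.univ.erase e₀ := by
    rw [hs, Finset.filter_ne']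
  have hcard : (s.card : ℝ) = (n : ℝ) - 1 := by
    rw [hse, Finset.card_erase_of_mem (Finset.mem_univ _), Finset.card_univ, Fintype.card_fin]
    have : 1 ≤ n := by omega
    push_cast [this]; ring
  have htrace : Matrix.trace S = a + t := by
    rw [ht, hse]
    simp only [Matrix.trace, Matrix.diag]
    exact (Finset.add_sum_erase _ _ (Finset.mem_univ e₀)).symm
  have hTnn : 0 ≤ T := Finset.sum_nonneg fun j _ => sq_nonneg _
  have hdiag : ∑ i ∈ s, S i i ^ 2 ≤ Q := by
    apply Finset.sum_le_sum
    intro i hi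
    exact Finset.single_le_sum (fun j _ => sq_nonneg (S i j)) hi
  have htQ : t ^ 2 ≤ ((n : ℝ) - 1) * Q := by
    have h1 : t ^ 2 ≤ (s.card : ℝ) * ∑ i ∈ s, S i i ^ 2 := by
      rw [ht]; exact sq_sum_le_card_mul_sum_sq
    have hn1 : (0:ℝ) ≤ (n : ℝ) - 1 := by
      have : (2:ℝ) ≤ (n:ℝ) := by exact_mod_cast hn
      linarith
    calc t ^ 2 ≤ (s.card : ℝ) * ∑ i ∈ s, S i i ^ 2 := h1
      _ ≤ ((n : ℝ) - 1) * Q := by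
          rw [hcard]
          exact mul_le_mul_of_nonneg_left hdiag hn1
  have hm : (0:ℝ) < (n : ℝ) - 1 := by
    have : (2:ℝ) ≤ (n:ℝ) := by exact_mod_cast hn
    linarith
  have hn2 : (0:ℝ) ≤ (n : ℝ) - 2 := by
    have : (2:ℝ) ≤ (n:ℝ) := by exact_mod_cast hn
    linarith
  rw [hW2, hD, htrace]
  rw [← mul_le_mul_iff_of_pos_left hm]
  field_simp
  ring_nf
  nlinarith [mul_le_mul_of_nonneg_left htQ (sq_nonneg W),
    mul_nonneg (mul_nonneg hn2 (by linarith : (0:ℝ) ≤ p - 1)) (mul_nonneg hTnn (sq_nonneg W)),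
    sq_nonneg W, hWpos, htQ, mul_nonneg (mul_nonneg hn2 (by linarith : (0:ℝ) ≤ p - 1)) hTnn]
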